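/- arXiv:2212.02600 — 3 statements merged into one kernel-verified Lean document; each statement's English description precedes it below -/
import Mathlib

section
/- Let c ∈ ℂ^{2M+1} and define log_{K,M}(σ) := Σ_{m=−M}^{M} c_m exp(i (π/2) m σ) for Hermitian matrices σ. Let ρ(α) and σ(α) be families of Hermitian d×d matrices depending differentiably on a real parameter α. Then d/dα Tr(ρ(α) log_{K,M} σ(α)) = Tr(ρ'(α) log_{K,M} σ(α)) + Σ_{m=−M}^{M} (i π m c_m / 2) ∫₀¹ Tr( ρ(α) e^{i s (π/2) m σ(α)} σ'(α) e^{i (1−s) (π/2) m σ(α)} ) ds, where ρ' and σ' denote derivatives with respect to α. -/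
open NormedSpace MeasureTheory intervalIntegral Filter Topology

variable {𝔸 : Type*} [NormedRing 𝔸] [NormedAlgebra ℝ 𝔸] [CompleteSpace 𝔸]

lemma exp_sub_exp (P Q : 𝔸) :
    exp P - exp Q
      = ∫ s in (0:ℝ)..1, exp (s • P) * (P - Q) * exp ((1-s) • Q) := by
  letI : NormedAlgebra ℚ 𝔸 := NormedAlgebra.restrictScalars ℚ ℝ 𝔸
  have h : ∀ s : ℝ, HasDerivAt (fun u : ℝ => exp (u • P) * exp ((1-u) • Q))
      (exp (s • P) * (P - Q) * exp ((1-s) • Q)) s := by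
    intro s
    have h1 : HasDerivAt (fun u : ℝ => exp (u • P)) (exp (s • P) * P) s :=
      hasDerivAt_exp_smul_const P s
    have h2 : HasDerivAt (fun u : ℝ => exp ((1-u) • Q))
        (-(Q * exp ((1-s) • Q))) s := by
      have hu : HasDerivAt (fun u : ℝ => 1 - u) (-1) s := by
        simpa using (hasDerivAt_id s).const_sub 1
      have := (hasDerivAt_exp_smul_const' Q (1-s)).scomp s hu
      simpa [Function.comp_def] using this
    have := h1.mul h2
    convert this using 1
    all_goals noncomm_ring
  have hcont : Continuous (fun s : ℝ => exp (s • P) * (P - Q) * exp ((1-s) • Q)) := by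
    exact ((exp_continuous.comp (continuous_id.smul continuous_const)).mul continuous_const).mul
      (exp_continuous.comp ((continuous_const.sub continuous_id).smul continuous_const))
  have key := intervalIntegral.integral_eq_sub_of_hasDerivAt (fun s _ => h s)
    (hcont.intervalIntegrable 0 1)
  rw [key]
  simp [exp_zero]

lemma hasDerivAt_exp_family {B : ℝ → 𝔸} {B' : ℝ → 𝔸} (hB : ∀ t, HasDerivAt B (B' t) t)
    (α : ℝ) :
    HasDerivAt (fun t => exp (B t))
      (∫ s in (0:ℝ)..1, exp (s • B α) * B' α * exp ((1-s) • B α)) α := by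
  letI : NormedAlgebra ℚ 𝔸 := NormedAlgebra.restrictScalars ℚ ℝ 𝔸
  have hBc : Continuous B := by
    refine continuous_iff_continuousAt.2 fun t => (hB t).continuousAt
  -- slope identity
  have hslope : ∀ t : ℝ, slope (fun t => exp (B t)) α t
      = ∫ s in (0:ℝ)..1, exp (s • B t) * slope B α t * exp ((1-s) • B α) := by
    intro t
    rw [slope_def_module, exp_sub_exp (B t) (B α)]
    rw [← intervalIntegral.integral_smul]
    congr 1
    ext s
    rw [slope_def_module]
    simp [mul_smul_comm, smul_mul_assoc]
  -- tendsto of the parametric integral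
  rw [hasDerivAt_iff_tendsto_slope]
  have hΔ : Tendsto (slope B α) (𝓝[≠] α) (𝓝 (B' α)) :=
    hasDerivAt_iff_tendsto_slope.1 (hB α)
  rw [show slope (fun t => exp (B t)) α
      = fun t => ∫ s in (0:ℝ)..1, exp (s • B t) * slope B α t * exp ((1-s) • B α)
    from funext hslope]
  -- compact bound for exp (s • B t)
  obtain ⟨C, hC⟩ := ((isCompact_Icc (a := α - 1) (b := α + 1)).prod
      (isCompact_Icc (a := (0:ℝ)) (b := 2))).exists_bound_of_continuousOn
      (f := fun p : ℝ × ℝ => exp (p.2 • B p.1))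
      ((exp_continuous.comp ((continuous_snd).smul (hBc.comp continuous_fst))).continuousOn)
  have hC0 : 0 ≤ C := le_trans (norm_nonneg _)
    (hC (α, 0) ⟨⟨by simp, by simp⟩, by simp, by norm_num⟩)
  refine tendsto_integral_filter_of_dominated_convergence
    (bound := fun _ => C * (‖B' α‖ + 1) * C) ?_ ?_ ?_ ?_
  · -- measurability
    filter_upwards with t
    exact (((exp_continuous.comp ((continuous_id.smul continuous_const))).mul
      continuous_const).mul (exp_continuous.comp
        ((continuous_const.sub continuous_id).smul continuous_const))).aestronglyMeasurable
  · -- bound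
    have h1 : ∀ᶠ t in 𝓝[≠] α, ‖slope B α t‖ ≤ ‖B' α‖ + 1 := by
      have := hΔ.norm.eventually_le_const (by linarith : ‖B' α‖ < ‖B' α‖ + 1)
      exact this
    have h2 : ∀ᶠ t in 𝓝[≠] α, t ∈ Set.Icc (α - 1) (α + 1) := by
      apply eventually_nhdsWithin_of_eventually_nhds
      have : Set.Icc (α - 1) (α + 1) ∈ 𝓝 α := Icc_mem_nhds (by linarith) (by linarith)
      exact this
    filter_upwards [h1, h2] with t h1 h2
    refine Filter.Eventually.of_forall fun s hs => ?_
    have hs' : s ∈ Set.Icc (0:ℝ) 1 := by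
      rw [Set.uIoc_of_le (by norm_num : (0:ℝ) ≤ 1)] at hs
      exact ⟨hs.1.le, hs.2⟩
    obtain ⟨hs1, hs2⟩ := hs'
    have e1 : ‖exp (s • B t)‖ ≤ C := hC (t, s)
      ⟨h2, by simpa using hs1, by simp; linarith⟩
    have e2 : ‖exp ((1-s) • B α)‖ ≤ C := hC (α, 1 - s)
      ⟨⟨by simp, by simp⟩, by simp; linarith, by simp; linarith⟩
    calc ‖exp (s • B t) * slope B α t * exp ((1-s) • B α)‖
        ≤ ‖exp (s • B t) * slope B α t‖ * ‖exp ((1-s) • B α)‖ := norm_mul_le _ _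
      _ ≤ ‖exp (s • B t)‖ * ‖slope B α t‖ * ‖exp ((1-s) • B α)‖ := by
          gcongr; exact norm_mul_le _ _
      _ ≤ C * (‖B' α‖ + 1) * C := by
          exact mul_le_mul (mul_le_mul e1 h1 (norm_nonneg _) hC0) e2 (norm_nonneg _)
            (by positivity)
  · exact intervalIntegrable_const
  · -- pointwise limit
    refine Filter.Eventually.of_forall fun s _ => ?_
    have hBt : Tendsto B (𝓝[≠] α) (𝓝 (B α)) :=
      (hBc.tendsto α).mono_left nhdsWithin_le_nhds
    exact (((exp_continuous.tendsto _).comp (hBt.const_smul s)).mul hΔ).mul tendsto_const_nhds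

open Matrix in
lemma per_term {d : ℕ} (z : ℂ) (ρ σ ρ' σ' : ℝ → Matrix (Fin d) (Fin d) ℂ)
    (hρ : ∀ i j t, HasDerivAt (fun t => ρ t i j) (ρ' t i j) t)
    (hσ : ∀ i j t, HasDerivAt (fun t => σ t i j) (σ' t i j) t) (α : ℝ) :
    HasDerivAt (fun t => (ρ t * exp (z • σ t)).trace)
      ((ρ' α * exp (z • σ α)).trace +
        z * ∫ s in (0:ℝ)..1,
          (ρ α * exp (((s : ℂ) * z) • σ α) * σ' α *
            exp ((((1:ℂ) - (s : ℂ)) * z) • σ α)).trace) α := by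
  letI : SeminormedRing (Matrix (Fin d) (Fin d) ℂ) := Matrix.linftyOpSemiNormedRing
  letI : NormedRing (Matrix (Fin d) (Fin d) ℂ) := Matrix.linftyOpNormedRing
  letI : NormedAlgebra ℝ (Matrix (Fin d) (Fin d) ℂ) := Matrix.linftyOpNormedAlgebra
  letI : NormedAlgebra ℂ (Matrix (Fin d) (Fin d) ℂ) := Matrix.linftyOpNormedAlgebra
  letI : NormedAlgebra ℚ (Matrix (Fin d) (Fin d) ℂ) := NormedAlgebra.restrictScalars ℚ ℂ _
  -- entrywise derivatives give matrix-valued derivatives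
  have entries : ∀ (f f' : ℝ → Matrix (Fin d) (Fin d) ℂ),
      (∀ i j t, HasDerivAt (fun t => f t i j) (f' t i j) t) →
      ∀ t, HasDerivAt f (f' t) t := by
    intro f f' h t
    have key : ∀ g : ℝ → Matrix (Fin d) (Fin d) ℂ,
        g = fun t => ∑ i : Fin d, ∑ j : Fin d, (g t i j) • single i j (1:ℂ) := by
      intro g
      funext u
      conv_lhs => rw [matrix_eq_sum_single (g u)]
      congr 1; funext i; congr 1; funext j
      rw [smul_single, smul_eq_mul, mul_one]
    rw [key f, show f' t = ∑ i : Fin d, ∑ j : Fin d, (f' t i j) • single i j (1:ℂ) by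
      conv_lhs => rw [key f']]
    refine HasDerivAt.fun_sum fun i _ => HasDerivAt.fun_sum fun j _ => ?_
    exact HasDerivAt.smul_const (𝕜' := ℂ) (h i j t) _
  have hρM : ∀ t, HasDerivAt ρ (ρ' t) t := entries ρ ρ' hρ
  have hσM : ∀ t, HasDerivAt σ (σ' t) t := entries σ σ' hσ
  have hB : ∀ t, HasDerivAt (fun t => z • σ t) (z • σ' t) t := fun t => (hσM t).const_smul z
  have hE := hasDerivAt_exp_family hB α
  have hmul := (hρM α).mul hE
  let T : Matrix (Fin d) (Fin d) ℂ →L[ℂ] ℂ :=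
    LinearMap.toContinuousLinearMap (traceLinearMap (Fin d) ℂ ℂ)
  have hTr := (T.restrictScalars ℝ).hasFDerivAt.comp_hasDerivAt α hmul
  have hTfun : ∀ X : Matrix (Fin d) (Fin d) ℂ, T X = X.trace := fun X => rfl
  -- identify the function
  have hfun : (fun t => (T.restrictScalars ℝ) (ρ t * exp (z • σ t)))
      = fun t => (ρ t * exp (z • σ t)).trace := rfl
  convert hTr using 1
  · rfl
  · rfl
  show _ = (ρ' α * exp (z • σ α) +
      ρ α * ∫ (s : ℝ) in (0:ℝ)..1,
        exp (s • (z • σ α)) * (z • σ' α) * exp ((1 - s) • (z • σ α))).trace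
  rw [Matrix.trace_add]
  congr 1
  -- trace of the integral
  let Lm : Matrix (Fin d) (Fin d) ℂ →ₗ[ℂ] ℂ :=
    (traceLinearMap (Fin d) ℂ ℂ) ∘ₗ (LinearMap.mulLeft ℂ (ρ α))
  let L : Matrix (Fin d) (Fin d) ℂ →L[ℂ] ℂ := LinearMap.toContinuousLinearMap Lm
  have hLfun : ∀ X, L X = (ρ α * X).trace := fun X => rfl
  letI : ENormedAddMonoid (Matrix (Fin d) (Fin d) ℂ) :=
    NormedAddCommGroup.toENormedAddCommMonoid.toENormedAddMonoid
  have hint : IntervalIntegrable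
      (fun s : ℝ => exp (s • (z • σ α)) * (z • σ' α) * exp ((1 - s) • (z • σ α)))
      MeasureTheory.volume 0 1 := by
    refine Continuous.intervalIntegrable ?_ 0 1
    exact ((exp_continuous.comp (continuous_id.smul continuous_const)).mul
      continuous_const).mul
      (exp_continuous.comp ((continuous_const.sub continuous_id).smul continuous_const))
  have push := L.intervalIntegral_comp_comm hint
  rw [← hLfun]
  erw [← push]
  -- rewrite the integrand
  have harg1 : ∀ s : ℝ, s • (z • σ α) = ((s : ℂ) * z) • σ α := by
    intro s
    rw [← smul_smul, ← Complex.coe_algebraMap, algebraMap_smul]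
  have hintegrand : ∀ s : ℝ,
      L (exp (s • (z • σ α)) * (z • σ' α) * exp ((1 - s) • (z • σ α)))
        = z * (ρ α * exp (((s : ℂ) * z) • σ α) * σ' α *
            exp ((((1:ℂ) - (s : ℂ)) * z) • σ α)).trace := by
    intro s
    rw [hLfun, harg1 s]
    have h2 : (1 - s) • (z • σ α) = (((1:ℂ) - (s : ℂ)) * z) • σ α := by
      rw [harg1 (1 - s)]
      push_cast
      ring_nf
    rw [h2]
    simp only [mul_smul_comm, smul_mul_assoc, Matrix.trace_smul, smul_eq_mul, mul_assoc]
  erw [intervalIntegral.integral_congr (g := fun s : ℝ =>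
      z * (ρ α * exp (((s : ℂ) * z) • σ α) * σ' α *
        exp ((((1:ℂ) - (s : ℂ)) * z) • σ α)).trace) (fun s _ => hintegrand s)]
  rw [intervalIntegral.integral_const_mul]


attribute [local instance] Matrix.normedAddCommGroup Matrix.normedSpace

/-- `log_{K,M}(σ) := Σ_{m=−M}^{M} c_m exp(i (π/2) m σ)`. -/
noncomputable def logKM {d : ℕ} (M : ℕ) (c : ℤ → ℂ) (σ : Matrix (Fin d) (Fin d) ℂ) :
    Matrix (Fin d) (Fin d) ℂ :=
  ∑ m ∈ Finset.Icc (-(M : ℤ)) (M : ℤ),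
    c m • NormedSpace.exp ((Complex.I * (Real.pi / 2) * (m : ℂ)) • σ)

/-- For differentiable families `ρ(α)`, `σ(α)` of Hermitian matrices,
`d/dα Tr(ρ log_{K,M} σ) = Tr(ρ' log_{K,M} σ)
  + Σ_{m=−M}^{M} (iπm c_m/2) ∫₀¹ Tr(ρ e^{is(π/2)mσ} σ' e^{i(1−s)(π/2)mσ}) ds`. -/
theorem stmt_5 {d : ℕ} (M : ℕ) (c : ℤ → ℂ)
    (ρ σ ρ' σ' : ℝ → Matrix (Fin d) (Fin d) ℂ)
    (hρH : ∀ t, (ρ t).IsHermitian) (hσH : ∀ t, (σ t).IsHermitian)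
    (hρ : ∀ t, HasDerivAt ρ (ρ' t) t) (hσ : ∀ t, HasDerivAt σ (σ' t) t) (α : ℝ) :
    HasDerivAt
      (fun t : ℝ => (ρ t * logKM M c (σ t)).trace)
      ((ρ' α * logKM M c (σ α)).trace +
        ∑ m ∈ Finset.Icc (-(M : ℤ)) (M : ℤ),
          (Complex.I * Real.pi * (m : ℂ) * c m / 2) *
            ∫ s in (0 : ℝ)..1,
              (ρ α *
                NormedSpace.exp ((Complex.I * (s : ℂ) * (Real.pi / 2) * (m : ℂ)) • σ α) *
                σ' α *
                NormedSpace.exp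
                  ((Complex.I * ((1 : ℂ) - (s : ℂ)) * (Real.pi / 2) * (m : ℂ)) • σ α)).trace)
      α := by
  classical
  have hρe : ∀ i j t, HasDerivAt (fun t => ρ t i j) (ρ' t i j) t := fun i j t =>
    hasDerivAt_pi.1 (hasDerivAt_pi.1 (hρ t) i) j
  have hσe : ∀ i j t, HasDerivAt (fun t => σ t i j) (σ' t i j) t := fun i j t =>
    hasDerivAt_pi.1 (hasDerivAt_pi.1 (hσ t) i) j
  set zc : ℤ → ℂ := fun m => Complex.I * (Real.pi / 2) * (m : ℂ) with hzc
  have key : ∀ (X : Matrix (Fin d) (Fin d) ℂ) (Y : Matrix (Fin d) (Fin d) ℂ),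
      (X * logKM M c Y).trace
        = ∑ m ∈ Finset.Icc (-(M : ℤ)) (M : ℤ),
            c m * (X * NormedSpace.exp (zc m • Y)).trace := by
    intro X Y
    rw [logKM, Finset.mul_sum, Matrix.trace_sum]
    exact Finset.sum_congr rfl fun m _ => by
      rw [Matrix.mul_smul, Matrix.trace_smul, smul_eq_mul]
  rw [show (fun t : ℝ => (ρ t * logKM M c (σ t)).trace)
      = fun t => ∑ m ∈ Finset.Icc (-(M : ℤ)) (M : ℤ),
          c m * (ρ t * NormedSpace.exp (zc m • σ t)).trace
    from funext fun t => key (ρ t) (σ t)]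
  have hterm : ∀ m ∈ Finset.Icc (-(M : ℤ)) (M : ℤ),
      HasDerivAt (fun t => c m * (ρ t * NormedSpace.exp (zc m • σ t)).trace)
        (c m * ((ρ' α * NormedSpace.exp (zc m • σ α)).trace +
          zc m * ∫ s in (0:ℝ)..1,
            (ρ α * NormedSpace.exp (((s : ℂ) * zc m) • σ α) * σ' α *
              NormedSpace.exp ((((1:ℂ) - (s : ℂ)) * zc m) • σ α)).trace)) α :=
    fun m _ => (per_term (zc m) ρ σ ρ' σ' hρe hσe α).const_mul (c m)
  have hsum := HasDerivAt.fun_sum hterm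
  convert hsum using 1
  · rfl
  rw [key (ρ' α) (σ α)]
  rw [← Finset.sum_add_distrib]
  refine Finset.sum_congr rfl fun m _ => ?_
  rw [mul_add]
  congr 1
  have harg1 : ∀ s : ℝ, Complex.I * (s : ℂ) * (Real.pi / 2) * (m : ℂ) = (s : ℂ) * zc m := by
    intro s; rw [hzc]; ring
  have harg2 : ∀ s : ℝ, Complex.I * ((1 : ℂ) - (s : ℂ)) * (Real.pi / 2) * (m : ℂ)
      = ((1:ℂ) - (s : ℂ)) * zc m := by
    intro s; rw [hzc]; ring
  rw [intervalIntegral.integral_congr (g := fun s : ℝ =>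
      (ρ α * NormedSpace.exp (((s : ℂ) * zc m) • σ α) * σ' α *
        NormedSpace.exp ((((1:ℂ) - (s : ℂ)) * zc m) • σ α)).trace)
    (fun s _ => by rw [harg1 s, harg2 s])]
  rw [show Complex.I * Real.pi * (m : ℂ) * c m / 2 = c m * zc m by rw [hzc]; ring]
  rw [mul_assoc]
end

section
/- Let σ(α) be a family of Hermitian d×d matrices depending differentiably on a real parameter α, and let θ ∈ ℝ. Then ‖∂_α e^{i θ σ(α)}‖_∞ ≤ |θ| · ‖∂_α σ(α)‖_∞. -/
attribute [local instance] Matrix.normedAddCommGroup Matrix.normedSpace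

/-- The operator (spectral) norm of a complex matrix. -/
noncomputable def opNorm {d : ℕ} (A : Matrix (Fin d) (Fin d) ℂ) : ℝ :=
  ‖Matrix.toEuclideanCLM (𝕜 := ℂ) A‖

open NormedSpace Complex Filter

section Aux

variable {A : Type*} [NormedRing A] [StarRing A] [CStarRing A] [NormedAlgebra ℂ A]
  [CompleteSpace A] [StarModule ℂ A]

lemma aux_exp_mem_unitary (c : ℝ) {x : A} (hx : IsSelfAdjoint x) :
    NormedSpace.exp ((Complex.I * (c : ℂ)) • x) ∈ unitary A := by
  letI : NormedAlgebra ℚ A := .restrictScalars ℚ ℂ A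
  apply exp_mem_unitary_of_mem_skewAdjoint
  rw [skewAdjoint.mem_iff, star_smul, hx.star_eq, ← neg_smul]
  congr 1
  simp [Complex.ext_iff]

lemma aux_norm_exp_one [Nontrivial A] (c : ℝ) {x : A} (hx : IsSelfAdjoint x) :
    ‖NormedSpace.exp ((Complex.I * (c : ℂ)) • x)‖ = 1 :=
  CStarRing.norm_of_mem_unitary (aux_exp_mem_unitary c hx)

lemma aux_lipschitz [Nontrivial A] (θ : ℝ) {x y : A}
    (hx : IsSelfAdjoint x) (hy : IsSelfAdjoint y) :
    ‖NormedSpace.exp ((Complex.I * (θ : ℂ)) • x) - NormedSpace.exp ((Complex.I * (θ : ℂ)) • y)‖ ≤ |θ| * ‖x - y‖ := by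
  set c : A := (Complex.I * (θ : ℂ)) • x with hc
  set c' : A := (Complex.I * (θ : ℂ)) • y with hc'
  have hsc : ∀ (s : ℝ) (z : A), s • ((Complex.I * (θ : ℂ)) • z)
      = (Complex.I * ((s * θ : ℝ) : ℂ)) • z := by
    intro s z
    rw [← smul_assoc]
    congr 1
    push_cast
    simp [smul_eq_mul]
    ring
  -- the interpolating path
  set g : ℝ → A := fun s => NormedSpace.exp (s • c) * NormedSpace.exp ((1 - s) • c') with hg
  have hderiv : ∀ s : ℝ, HasDerivAt g (NormedSpace.exp (s • c) * (c - c') * NormedSpace.exp ((1 - s) • c')) s := by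
    intro s
    have h1 : HasDerivAt (fun u : ℝ => NormedSpace.exp (u • c)) (NormedSpace.exp (s • c) * c) s := by
      have := hasDerivAt_exp_smul_const (𝕂 := ℝ) c s
      exact this
    have hout : HasDerivAt (fun u : ℝ => NormedSpace.exp (u • c')) (c' * NormedSpace.exp ((1 - s) • c')) (1 - s) := by
      have := hasDerivAt_exp_smul_const' (𝕂 := ℝ) c' (1 - s)
      exact this
    have hin : HasDerivAt (fun u : ℝ => 1 - u) (-1 : ℝ) s := by
      simpa using (hasDerivAt_id s).const_sub 1
    have h2 : HasDerivAt (fun u : ℝ => NormedSpace.exp ((1 - u) • c'))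
        (-(c' * NormedSpace.exp ((1 - s) • c'))) s := by
      simpa [Function.comp_def] using hout.scomp s hin
    have := h1.mul h2
    convert this using 1
    noncomm_ring
    noncomm_ring
  have hbound : ∀ s : ℝ, ‖NormedSpace.exp (s • c) * (c - c') * NormedSpace.exp ((1 - s) • c')‖ ≤ |θ| * ‖x - y‖ := by
    intro s
    have e1 : ‖NormedSpace.exp (s • c)‖ = 1 := by
      rw [hc, hsc]; exact aux_norm_exp_one _ hx
    have e2 : ‖NormedSpace.exp ((1 - s) • c')‖ = 1 := by
      rw [hc', hsc]; exact aux_norm_exp_one _ hy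
    have e3 : ‖c - c'‖ = |θ| * ‖x - y‖ := by
      rw [hc, hc', ← smul_sub, norm_smul]
      simp [Real.norm_eq_abs]
    calc ‖NormedSpace.exp (s • c) * (c - c') * NormedSpace.exp ((1 - s) • c')‖
        ≤ ‖NormedSpace.exp (s • c) * (c - c')‖ * ‖NormedSpace.exp ((1 - s) • c')‖ := norm_mul_le _ _
      _ ≤ ‖NormedSpace.exp (s • c)‖ * ‖c - c'‖ * ‖NormedSpace.exp ((1 - s) • c')‖ := by
          gcongr; exact norm_mul_le _ _
      _ = |θ| * ‖x - y‖ := by rw [e1, e2, e3]; ring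
  have hmvt := Convex.norm_image_sub_le_of_norm_hasDerivWithin_le
    (f := g) (f' := fun s => NormedSpace.exp (s • c) * (c - c') * NormedSpace.exp ((1 - s) • c'))
    (C := |θ| * ‖x - y‖) (s := Set.univ)
    (fun s _ => (hderiv s).hasDerivWithinAt)
    (fun s _ => hbound s) convex_univ (Set.mem_univ (0 : ℝ)) (Set.mem_univ (1 : ℝ))
  have hg1 : g 1 = NormedSpace.exp c := by simp [hg]
  have hg0 : g 0 = NormedSpace.exp c' := by simp [hg]
  rw [hg1, hg0] at hmvt
  simpa using hmvt

end Aux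

section Transfer

variable {d : ℕ}

/-- `Matrix.toEuclideanCLM` as a `ℂ`-linear equivalence. -/
noncomputable def eLin (d : ℕ) :
    Matrix (Fin d) (Fin d) ℂ ≃ₗ[ℂ] (EuclideanSpace ℂ (Fin d) →L[ℂ] EuclideanSpace ℂ (Fin d)) :=
  { toFun := Matrix.toEuclideanCLM (𝕜 := ℂ)
    invFun := (Matrix.toEuclideanCLM (𝕜 := ℂ)).symm
    left_inv := fun M => StarAlgEquiv.symm_apply_apply _ M
    right_inv := fun f => StarAlgEquiv.apply_symm_apply _ f
    map_add' := fun M N => map_add _ M N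
    map_smul' := fun r M => map_smul (Matrix.toEuclideanCLM (𝕜 := ℂ)) r M }

/-- `Matrix.toEuclideanCLM` as a real continuous linear equivalence. -/
noncomputable def eR (d : ℕ) :
    Matrix (Fin d) (Fin d) ℂ ≃L[ℝ] (EuclideanSpace ℂ (Fin d) →L[ℂ] EuclideanSpace ℂ (Fin d)) :=
  LinearEquiv.toContinuousLinearEquiv ((eLin d).restrictScalars ℝ)

lemma eR_apply (M : Matrix (Fin d) (Fin d) ℂ) :
    eR d M = Matrix.toEuclideanCLM (𝕜 := ℂ) M := rfl

lemma eR_symm_apply (f : EuclideanSpace ℂ (Fin d) →L[ℂ] EuclideanSpace ℂ (Fin d)) :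
    (eR d).symm f = (Matrix.toEuclideanCLM (𝕜 := ℂ)).symm f := rfl

/-- `toEuclideanCLM` commutes with the exponential. -/
lemma eR_exp (M : Matrix (Fin d) (Fin d) ℂ) :
    Matrix.toEuclideanCLM (𝕜 := ℂ) (NormedSpace.exp M) = NormedSpace.exp (Matrix.toEuclideanCLM (𝕜 := ℂ) M) := by
  rw [exp_eq_tsum ℂ, exp_eq_tsum ℂ]
  have h := (eR d).map_tsum (L := SummationFilter.unconditional ℕ) (f := fun n : ℕ => (n.factorial : ℂ)⁻¹ • M ^ n)
  calc Matrix.toEuclideanCLM (𝕜 := ℂ) (∑' n : ℕ, (n.factorial : ℂ)⁻¹ • M ^ n)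
      = eR d (∑' n : ℕ, (n.factorial : ℂ)⁻¹ • M ^ n) := rfl
    _ = ∑' n : ℕ, eR d ((n.factorial : ℂ)⁻¹ • M ^ n) := h
    _ = ∑' n : ℕ, (n.factorial : ℂ)⁻¹ • (Matrix.toEuclideanCLM (𝕜 := ℂ) M) ^ n := by
        congr 1
        funext n
        rw [show eR d ((n.factorial : ℂ)⁻¹ • M ^ n)
            = Matrix.toEuclideanCLM (𝕜 := ℂ) ((n.factorial : ℂ)⁻¹ • M ^ n) from rfl,
          map_smul (Matrix.toEuclideanCLM (𝕜 := ℂ)), map_pow]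

end Transfer

set_option maxHeartbeats 1000000 in
/-- For a differentiable family of Hermitian matrices `σ(α)` and `θ ∈ ℝ`,
`‖∂_α e^{iθσ(α)}‖_∞ ≤ |θ| ‖∂_α σ(α)‖_∞`. -/
theorem stmt_9 {d : ℕ} (θ : ℝ)
    (σ σ' : ℝ → Matrix (Fin d) (Fin d) ℂ)
    (hσH : ∀ t, (σ t).IsHermitian)
    (hσ : ∀ t, HasDerivAt σ (σ' t) t) (α : ℝ) :
    ∃ D, HasDerivAt (fun t : ℝ => NormedSpace.exp ((Complex.I * (θ : ℂ)) • σ t)) D α ∧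
      opNorm D ≤ |θ| * opNorm (σ' α) := by
  rcases Nat.eq_zero_or_pos d with hd | hd
  · -- trivial case `d = 0`
    subst hd
    haveI : Subsingleton (Matrix (Fin 0) (Fin 0) ℂ) :=
      ⟨fun a b => by ext i; exact i.elim0⟩
    refine ⟨0, ?_, ?_⟩
    · have hfun : (fun t : ℝ => NormedSpace.exp ((Complex.I * (θ : ℂ)) • σ t))
          = fun _ : ℝ => (0 : Matrix (Fin 0) (Fin 0) ℂ) :=
        funext fun t => Subsingleton.elim _ _
      rw [hfun]
      exact hasDerivAt_const α 0
    · have h0 : opNorm (0 : Matrix (Fin 0) (Fin 0) ℂ) = 0 := by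
        unfold opNorm
        rw [map_zero, norm_zero]
      rw [h0]
      exact mul_nonneg (abs_nonneg θ) (norm_nonneg _)
  · -- main case
    haveI : Nontrivial (EuclideanSpace ℂ (Fin d)) := by
      refine nontrivial_of_ne (EuclideanSpace.single (⟨0, hd⟩ : Fin d) (1 : ℂ)) 0 fun h => ?_
      have h1 : ‖EuclideanSpace.single (⟨0, hd⟩ : Fin d) (1 : ℂ)‖ = 1 := by simp
      rw [h] at h1
      simp at h1
    haveI : Nontrivial (EuclideanSpace ℂ (Fin d) →L[ℂ] EuclideanSpace ℂ (Fin d)) := by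
      obtain ⟨v, w, hvw⟩ := exists_pair_ne (EuclideanSpace ℂ (Fin d))
      refine ⟨1, 0, fun h => hvw ?_⟩
      have hv := congrFun (congrArg DFunLike.coe h) v
      have hw := congrFun (congrArg DFunLike.coe h) w
      simp only [ContinuousLinearMap.one_apply, ContinuousLinearMap.zero_apply] at hv hw
      rw [hv, hw]
    set a : ℝ → (EuclideanSpace ℂ (Fin d) →L[ℂ] EuclideanSpace ℂ (Fin d)) :=
      fun t => Matrix.toEuclideanCLM (𝕜 := ℂ) (σ t) with ha_def
    set a' : EuclideanSpace ℂ (Fin d) →L[ℂ] EuclideanSpace ℂ (Fin d) :=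
      Matrix.toEuclideanCLM (𝕜 := ℂ) (σ' α) with ha'_def
    have ha : HasDerivAt a a' α :=
      ((eR d).toContinuousLinearMap.hasFDerivAt).comp_hasDerivAt α (hσ α)
    have ha2 : HasDerivAt (fun t => (Complex.I * (θ : ℂ)) • a t)
        ((Complex.I * (θ : ℂ)) • a') α := ha.const_smul (Complex.I * (θ : ℂ))
    set A := (Complex.I * (θ : ℂ)) • a α with hA
    have hexp : HasFDerivAt NormedSpace.exp (fderiv ℂ NormedSpace.exp A) A :=
      (NormedSpace.exp_analytic (𝕂 := ℂ) A).differentiableAt.hasFDerivAt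
    set D0 : EuclideanSpace ℂ (Fin d) →L[ℂ] EuclideanSpace ℂ (Fin d) :=
      fderiv ℂ NormedSpace.exp A ((Complex.I * (θ : ℂ)) • a') with hD0
    have hF : HasDerivAt (fun t => NormedSpace.exp ((Complex.I * (θ : ℂ)) • a t)) D0 α :=
      by have h := hexp.restrictScalars ℝ; exact h.comp_hasDerivAt α ha2
    -- selfadjointness
    have hsa : ∀ t, IsSelfAdjoint (a t) := by
      intro t
      have h1 : IsSelfAdjoint (σ t) := (hσH t)
      exact h1.map (Matrix.toEuclideanCLM (𝕜 := ℂ))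
    -- the function equals the transported matrix exponential
    have hFun : (fun t : ℝ => NormedSpace.exp ((Complex.I * (θ : ℂ)) • a t))
        = fun t : ℝ => eR d (NormedSpace.exp ((Complex.I * (θ : ℂ)) • σ t)) := by
      funext t
      rw [eR_apply, eR_exp, map_smul (Matrix.toEuclideanCLM (𝕜 := ℂ))]
    refine ⟨(eR d).symm D0, ?_, ?_⟩
    · have h1 : HasDerivAt (fun t : ℝ => eR d (NormedSpace.exp ((Complex.I * (θ : ℂ)) • σ t))) D0 α := by
        rw [← hFun]; exact hF
      have h2 := ((eR d).symm.toContinuousLinearMap.hasFDerivAt).comp_hasDerivAt α h1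
      have heq : (⇑(eR d).symm.toContinuousLinearMap ∘
          fun t : ℝ => eR d (NormedSpace.exp ((Complex.I * (θ : ℂ)) • σ t)))
          = fun t : ℝ => NormedSpace.exp ((Complex.I * (θ : ℂ)) • σ t) := by
        funext t
        simp [Function.comp]
      rw [heq] at h2
      exact h2
    · -- norms
      have hnorm1 : opNorm ((eR d).symm D0) = ‖D0‖ := by
        unfold opNorm
        rw [eR_symm_apply, StarAlgEquiv.apply_symm_apply]
      have hnorm2 : opNorm (σ' α) = ‖a'‖ := by rw [ha'_def]; rfl
      rw [hnorm1, hnorm2]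
      -- limit comparison
      have hslopeF : Tendsto (slope (fun t => NormedSpace.exp ((Complex.I * (θ : ℂ)) • a t)) α)
          (nhdsWithin α {α}ᶜ) (nhds D0) := hasDerivAt_iff_tendsto_slope.mp hF
      have hslopea : Tendsto (slope a α) (nhdsWithin α {α}ᶜ) (nhds a') :=
        hasDerivAt_iff_tendsto_slope.mp ha
      refine le_of_tendsto_of_tendsto' hslopeF.norm (hslopea.norm.const_mul |θ|) ?_
      intro t
      rw [slope_def_module, slope_def_module, norm_smul, norm_smul]
      calc ‖(t - α)⁻¹‖ * ‖NormedSpace.exp ((Complex.I * (θ : ℂ)) • a t)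
            - NormedSpace.exp ((Complex.I * (θ : ℂ)) • a α)‖
          ≤ ‖(t - α)⁻¹‖ * (|θ| * ‖a t - a α‖) := by
            gcongr
            exact aux_lipschitz θ (hsa t) (hsa α)
        _ = |θ| * (‖(t - α)⁻¹‖ * ‖a t - a α‖) := by ring
end

section
/- Let l and L be positive integers with l ≤ L, and let M be a nonnegative integer. Then 2^{−l} Σ_{m=0}^{⌊l/2⌋−M} C(l,m) (l − 2m) ≤ l · e^{−M²/L}, where the sum is empty (equal to 0) if ⌊l/2⌋ − M < 0 and C(l,m) is the binomial coefficient. -/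
open Finset Real

/-- Chernoff bound for binomial tail: `∑_{m=0}^{k} C(l,m) ≤ 2^l exp(-2 d² / l)`
where `d = l/2 - k ≥ 0`. -/
lemma chernoff_tail (l k : ℕ) (hl : 0 < l) (hk : (k : ℝ) ≤ (l : ℝ) / 2) :
    (∑ m ∈ Finset.range (k + 1), (l.choose m : ℝ)) ≤
      2 ^ l * Real.exp (-2 * ((l : ℝ) / 2 - k) ^ 2 / l) := by
  set d : ℝ := (l : ℝ) / 2 - k with hd
  have hd0 : 0 ≤ d := by rw [hd]; linarith
  have hl0 : (0 : ℝ) < l := by exact_mod_cast hl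
  set t : ℝ := 4 * d / l with ht
  have ht0 : 0 ≤ t := by positivity
  -- Step 1: ∑_{m ≤ k} C(l,m) ≤ exp(t k) * (exp(-t) + 1)^l
  have step1 : (∑ m ∈ Finset.range (k + 1), (l.choose m : ℝ)) ≤
      Real.exp (t * k) * (Real.exp (-t) + 1) ^ l := by
    have key : ∀ m ∈ Finset.range (k + 1),
        (l.choose m : ℝ) ≤ Real.exp (t * k) * ((l.choose m : ℝ) * Real.exp (-t) ^ m) := by
      intro m hm
      have hm' : m ≤ k := Nat.lt_succ_iff.mp (Finset.mem_range.mp hm)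
      have : Real.exp (-t) ^ m = Real.exp (-t * m) := by
        rw [← Real.exp_nat_mul]; ring_nf
      rw [this, ← mul_assoc, mul_comm (Real.exp (t * k)) _, mul_assoc, ← Real.exp_add]
      have h1 : (1 : ℝ) ≤ Real.exp (t * k + -t * m) := by
        apply Real.one_le_exp
        have : (m : ℝ) ≤ k := by exact_mod_cast hm'
        nlinarith
      nlinarith [show (0 : ℝ) ≤ (l.choose m : ℝ) from Nat.cast_nonneg _]
    calc (∑ m ∈ Finset.range (k + 1), (l.choose m : ℝ))
        ≤ ∑ m ∈ Finset.range (k + 1),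
            Real.exp (t * k) * ((l.choose m : ℝ) * Real.exp (-t) ^ m) :=
          Finset.sum_le_sum key
      _ ≤ ∑ m ∈ Finset.range (l + 1),
            Real.exp (t * k) * ((l.choose m : ℝ) * Real.exp (-t) ^ m) := by
          apply Finset.sum_le_sum_of_subset_of_nonneg
          · apply Finset.range_subset_range.mpr
            have : (k : ℝ) < l := by linarith
            have : k < l := by exact_mod_cast this
            omega
          · intro i _ _; positivity
      _ = Real.exp (t * k) * (Real.exp (-t) + 1) ^ l := by
          rw [← Finset.mul_sum, add_pow]
          congr 1
          apply Finset.sum_congr rfl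
          intro m _
          rw [one_pow]; ring
  -- Step 2: exp(-t) + 1 ≤ 2 * exp(t²/8 - t/2)
  have step2 : Real.exp (-t) + 1 ≤ 2 * Real.exp (t ^ 2 / 8 - t / 2) := by
    have hco : Real.exp (-t) + 1 = 2 * Real.exp (-t / 2) * Real.cosh (t / 2) := by
      rw [Real.cosh_eq]
      rw [show 2 * Real.exp (-t / 2) * ((Real.exp (t / 2) + Real.exp (-(t / 2))) / 2)
          = Real.exp (-t / 2) * Real.exp (t / 2)
            + Real.exp (-t / 2) * Real.exp (-(t / 2)) from by ring,
        ← Real.exp_add, ← Real.exp_add,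
        show -t / 2 + t / 2 = (0 : ℝ) from by ring,
        show -t / 2 + -(t / 2) = -t from by ring, Real.exp_zero]
      ring
    rw [hco]
    have h1 : Real.cosh (t / 2) ≤ Real.exp ((t / 2) ^ 2 / 2) :=
      Real.cosh_le_exp_half_sq (t / 2)
    have h2 : 2 * Real.exp (-t / 2) * Real.cosh (t / 2) ≤
        2 * Real.exp (-t / 2) * Real.exp ((t / 2) ^ 2 / 2) := by
      have : (0 : ℝ) ≤ 2 * Real.exp (-t / 2) := by positivity
      exact mul_le_mul_of_nonneg_left h1 this
    calc 2 * Real.exp (-t / 2) * Real.cosh (t / 2)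
        ≤ 2 * Real.exp (-t / 2) * Real.exp ((t / 2) ^ 2 / 2) := h2
      _ = 2 * Real.exp (t ^ 2 / 8 - t / 2) := by
          rw [mul_assoc, ← Real.exp_add]; ring_nf
  -- Combine
  have step3 : (Real.exp (-t) + 1) ^ l ≤ 2 ^ l * Real.exp (l * (t ^ 2 / 8 - t / 2)) := by
    calc (Real.exp (-t) + 1) ^ l ≤ (2 * Real.exp (t ^ 2 / 8 - t / 2)) ^ l := by
          apply pow_le_pow_left₀ (by positivity) step2
      _ = 2 ^ l * Real.exp (l * (t ^ 2 / 8 - t / 2)) := by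
          rw [mul_pow, ← Real.exp_nat_mul]
  have final : Real.exp (t * k) * (2 ^ l * Real.exp (l * (t ^ 2 / 8 - t / 2))) =
      2 ^ l * Real.exp (-2 * d ^ 2 / l) := by
    rw [mul_comm (Real.exp (t * k)) _, mul_assoc, ← Real.exp_add]
    congr 2
    have hk' : (k : ℝ) = (l : ℝ) / 2 - d := by rw [hd]; ring
    rw [ht, hk']
    field_simp
    ring
  calc (∑ m ∈ Finset.range (k + 1), (l.choose m : ℝ))
      ≤ Real.exp (t * k) * (Real.exp (-t) + 1) ^ l := step1
    _ ≤ Real.exp (t * k) * (2 ^ l * Real.exp (l * (t ^ 2 / 8 - t / 2))) := by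
        exact mul_le_mul_of_nonneg_left step3 (Real.exp_pos _).le
    _ = 2 ^ l * Real.exp (-2 * d ^ 2 / l) := final

/-- For positive integers `l ≤ L` and a nonnegative integer `M`,
`2^{−l} Σ_{m=0}^{⌊l/2⌋−M} C(l,m)(l−2m) ≤ l e^{−M²/L}` (the sum being empty when
`⌊l/2⌋ − M < 0`). -/
theorem stmt_11 (l L M : ℕ) (hl : 0 < l) (hL : 0 < L) (hlL : l ≤ L) :
    (∑ m ∈ Finset.range (l / 2 + 1 - M), (l.choose m : ℝ) * ((l : ℝ) - 2 * m)) / 2 ^ l ≤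
      (l : ℝ) * Real.exp (-((M : ℝ) ^ 2) / L) := by
  rcases le_or_gt (l / 2 + 1) M with h | h
  · rw [Nat.sub_eq_zero_of_le h]
    simp
    positivity
  · have hM : M ≤ l / 2 := by omega
    set k : ℕ := l / 2 - M with hk
    have hrange : l / 2 + 1 - M = k + 1 := by omega
    rw [hrange]
    have hl0 : (0 : ℝ) < l := by exact_mod_cast hl
    have hL0 : (0 : ℝ) < L := by exact_mod_cast hL
    have hk2 : (k : ℝ) ≤ (l : ℝ) / 2 := by
      have : (k : ℝ) ≤ ((l / 2 : ℕ) : ℝ) := by exact_mod_cast Nat.sub_le _ _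
      have h2 : ((l / 2 : ℕ) : ℝ) ≤ (l : ℝ) / 2 := by
        rw [le_div_iff₀ (by norm_num : (0:ℝ) < 2)]
        exact_mod_cast Nat.div_mul_le_self l 2
      linarith
    -- termwise bound: C(l,m)(l - 2m) ≤ l * C(l,m)
    have hterm : (∑ m ∈ Finset.range (k + 1), (l.choose m : ℝ) * ((l : ℝ) - 2 * m)) ≤
        (l : ℝ) * ∑ m ∈ Finset.range (k + 1), (l.choose m : ℝ) := by
      rw [Finset.mul_sum]
      apply Finset.sum_le_sum
      intro m _
      have h1 : (l : ℝ) - 2 * m ≤ (l : ℝ) := by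
        have : (0 : ℝ) ≤ (m : ℝ) := Nat.cast_nonneg m
        linarith
      have h2 : (0 : ℝ) ≤ (l.choose m : ℝ) := Nat.cast_nonneg _
      nlinarith
    have hch := chernoff_tail l k hl hk2
    set d : ℝ := (l : ℝ) / 2 - k with hd
    have hMd : (M : ℝ) ≤ d := by
      rw [hd]
      have hkM : (k : ℝ) + M ≤ (l : ℝ) / 2 := by
        have h1 : ((k + M : ℕ) : ℝ) = (k : ℝ) + M := by push_cast; ring
        have h2 : k + M = l / 2 := by omega
        have h3 : ((l / 2 : ℕ) : ℝ) ≤ (l : ℝ) / 2 := by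
          rw [le_div_iff₀ (by norm_num : (0:ℝ) < 2)]
          exact_mod_cast Nat.div_mul_le_self l 2
        rw [← h1, h2]; exact h3
      linarith
    have hexp : Real.exp (-2 * d ^ 2 / l) ≤ Real.exp (-((M : ℝ) ^ 2) / L) := by
      apply Real.exp_le_exp.mpr
      rw [div_le_div_iff₀ hl0 hL0]
      have hM0 : (0 : ℝ) ≤ (M : ℝ) := Nat.cast_nonneg M
      have hM2 : (M : ℝ) ^ 2 ≤ d ^ 2 := by nlinarith
      have hlL' : (l : ℝ) ≤ L := by exact_mod_cast hlL
      nlinarith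
    rw [div_le_iff₀ (by positivity : (0:ℝ) < (2:ℝ) ^ l)]
    calc (∑ m ∈ Finset.range (k + 1), (l.choose m : ℝ) * ((l : ℝ) - 2 * m))
        ≤ (l : ℝ) * ∑ m ∈ Finset.range (k + 1), (l.choose m : ℝ) := hterm
      _ ≤ (l : ℝ) * (2 ^ l * Real.exp (-2 * d ^ 2 / l)) :=
          mul_le_mul_of_nonneg_left hch hl0.le
      _ ≤ (l : ℝ) * (2 ^ l * Real.exp (-((M : ℝ) ^ 2) / L)) := by
          apply mul_le_mul_of_nonneg_left _ hl0.le
          exact mul_le_mul_of_nonneg_left hexp (by positivity)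
      _ = (l : ℝ) * Real.exp (-((M : ℝ) ^ 2) / L) * 2 ^ l := by ring
end
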